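/- Let k be a field and let d ≥ 4 be an integer with char(k) ∤ 2d. Suppose α, β, γ ∈ k with α ≠ 0 satisfy the polynomial identity α·(X² + βX + 1)^d − X^{2d} − 1 = (α − 1)·(X² + γX + 1)^d in k[X] (equivalently, α(t + β + t⁻¹)^d − t^d − t^{−d} = (α−1)(t + γ + t⁻¹)^d in k[t, t⁻¹]). Then the characteristic of k is an odd prime p, there exists m ≥ 1 with 2d = p^m + 1, and moreover α = 1/2, γ = −β, and β² = 4. -/

import Mathlib

open Polynomial
set_option maxRecDepth 40000

private lemma aux_lucas (p : ℕ) [Fact p.Prime] : ∀ a s : ℕ, ((p^a*s).choose (p^a)) ≡ s [MOD p] := by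
  intro a
  induction a with
  | zero => intro s; simpa [Nat.choose_one_right] using Nat.ModEq.refl s
  | succ a ih =>
    intro s
    have hp2 := (Fact.out : p.Prime).two_le
    have h := Choose.choose_modEq_choose_mod_mul_choose_div_nat (p := p)
      (n := p^(a+1)*s) (k := p^(a+1))
    have e1 : p^(a+1)*s = p * (p^a*s) := by ring
    have e2 : p^(a+1) = p * p^a := by ring
    rw [e1, e2] at h ⊢
    rw [Nat.mul_mod_right, Nat.mul_mod_right, Nat.mul_div_cancel_left _ (by omega),
      Nat.mul_div_cancel_left _ (by omega), Nat.choose_zero_right, one_mul] at h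
    exact h.trans (ih s)

private lemma lucas_dvd_pred (p : ℕ) [Fact p.Prime] {n : ℕ} (a : ℕ) (ha : 1 ≤ a) (hpn : p ∣ n) :
    p ∣ n.choose (p^a - 1) := by
  have hp2 := (Fact.out : p.Prime).two_le
  have h := Choose.choose_modEq_choose_mod_mul_choose_div_nat (p := p)
    (n := n) (k := p^a - 1)
  have e1 : n % p = 0 := Nat.eq_zero_of_dvd_of_lt ((Nat.dvd_mod_iff dvd_rfl).mpr hpn) (Nat.mod_lt _ (by omega))
  have e2 : (p^a - 1) % p = p - 1 := by
    obtain ⟨t, ht⟩ : ∃ t, p^a = p*t := ⟨p^(a-1), by rw [← pow_succ']; congr 1; omega⟩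
    have hpa : 0 < p^a := pow_pos (by omega) a
    have ht1 : 1 ≤ t := by by_contra h0; push_neg at h0; interval_cases t <;> omega
    have hmul : p*(t-1) + p = p*t := by rw [← Nat.mul_succ]; congr 1; omega
    have : p^a - 1 = p*(t-1) + (p-1) := by omega
    rw [this, Nat.mul_add_mod, Nat.mod_eq_of_lt (by omega)]
  rw [e1, e2, Nat.choose_eq_zero_of_lt (show 0 < p - 1 by omega), Nat.zero_mul] at h
  exact (Nat.modEq_zero_iff_dvd).mp h

private lemma nt {p n : ℕ} (hp : p.Prime) (hpn : p ∣ n) (hn : 7 ≤ n)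
    (hbin : ∀ j, 2 ≤ j → j ≤ n - 1 → (n.choose j) ≡ n.choose (j-1) [MOD p]) :
    ∃ m, 1 ≤ m ∧ n = p ^ m := by
  haveI : Fact p.Prime := ⟨hp⟩
  have hn0 : n ≠ 0 := by omega
  have ha1 : 1 ≤ n.factorization p := hp.factorization_pos_of_dvd hn0 hpn
  have hps : ¬ p ∣ (n / p ^ n.factorization p) := Nat.not_dvd_ordCompl hp hn0
  have hord : p ^ (n.factorization p) * (n / p ^ n.factorization p) = n :=
    Nat.ordProj_mul_ordCompl_eq_self n p
  obtain ⟨a, s, ha1, hps, hord⟩ :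
      ∃ a s, 1 ≤ a ∧ ¬ p ∣ s ∧ p ^ a * s = n := ⟨_, _, ha1, hps, hord⟩
  have hp2 := hp.two_le
  have hpa2 : 2 ≤ p ^ a := le_trans hp2 (Nat.le_self_pow (by omega) p)
  by_cases hs1 : s = 1
  · exact ⟨a, ha1, by rw [hs1, mul_one] at hord; omega⟩
  · exfalso
    have hs0 : s ≠ 0 := by rintro rfl; omega
    have hs2 : 2 ≤ s := by omega
    have hjle : p ^ a ≤ n - 1 := by
      have h22 : p^a * 2 ≤ p^a * s := Nat.mul_le_mul_left _ hs2
      omega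
    have hmod := hbin (p^a) hpa2 hjle
    have h1 : p ∣ n.choose (p^a - 1) := lucas_dvd_pred p a ha1 hpn
    have h2 : (n.choose (p^a)) ≡ s [MOD p] := by
      have := aux_lucas p a s; rwa [hord] at this
    exact hps ((Nat.modEq_zero_iff_dvd).mp
      ((h2.symm.trans hmod).trans ((Nat.modEq_zero_iff_dvd).mpr h1)))


private theorem stmt0' {k : Type*} [Field k] (e : ℕ)
    (hchar : ¬ (ringChar k ∣ 2 * (e+4))) (α β γ : k) (hα : α ≠ 0)
    (h : C α * (X ^ 2 + C β * X + 1) ^ (e+4) - X ^ (2*e+8) - 1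
        = C (α - 1) * (X ^ 2 + C γ * X + 1) ^ (e+4)) :
    (∃ (p m : ℕ), p.Prime ∧ Odd p ∧ ringChar k = p ∧ 1 ≤ m ∧ 2 * (e+4) = p ^ m + 1)
      ∧ α = 1 / 2 ∧ γ = -β ∧ β ^ 2 = 4 := by
  haveI : CharP k (ringChar k) := ringChar.charP k
  have hcast : ∀ n : ℕ, ((n:k) = 0) ↔ ringChar k ∣ n := fun n => CharP.cast_eq_zero_iff k _ n
  have h2 : (2:k) ≠ 0 := by
    intro h0
    exact hchar (dvd_mul_of_dvd_left ((hcast 2).mp (by exact_mod_cast h0)) _)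
  have he4 : ((e:k)+4) ≠ 0 := by
    intro h0
    refine hchar (dvd_mul_of_dvd_right ((hcast (e+4)).mp (by push_cast; exact h0)) _)
  simp only [map_sub, map_one] at h
  -- derivative of h
  have h1 := congrArg derivative h
  simp only [derivative_sub, derivative_mul, derivative_C, derivative_one, derivative_pow,
    derivative_add, derivative_X_pow, derivative_X, zero_mul, mul_zero, zero_add, add_zero,
    mul_one, sub_zero, map_sub, map_add, map_mul, map_ofNat, map_one, pow_one] at h1
  push_cast at h1
  simp only [map_add, map_mul, map_ofNat, map_one, pow_one] at h1
  -- generalize P and Q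
  obtain ⟨Pp, hPp⟩ : ∃ p : k[X], X ^ 2 + C β * X + 1 = p := ⟨_, rfl⟩
  obtain ⟨Qp, hQp⟩ : ∃ p : k[X], X ^ 2 + C γ * X + 1 = p := ⟨_, rfl⟩
  rw [hPp, hQp] at h h1
  have hPQ : (2*X + C β)*Qp - (2*X + C γ)*Pp = -((C β - C γ)*(X^2-1)) := by
    rw [← hPp, ← hQp]; ring
  have key : C α * (C (e:k) + 4) * Pp ^ (e+3) *
      ((2*X + C β)*(X^(2*e+8)+1) - 2*Pp*X^(2*e+7)
        - (C α - 1)*(C β - C γ)*((X^2-1)*Qp^(e+3))) = 0 := by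
    linear_combination (norm := ring1)
      (-(C α * (C (e:k) + 4) * Pp ^ (e+3) * (2*X + C β))) * h
      + (C α * Pp ^ (e+4)) * h1
      + (C α * (C (e:k) + 4) * (1 - C α) * Pp^(e+3) * Qp^(e+3)) * hPQ
  have hPne : Pp ≠ 0 := by
    rw [← hPp]; intro h0
    have := congrArg (fun p => coeff p 0) h0
    simp [coeff_one] at this
  have hNne : (C (e:k) + 4 : k[X]) ≠ 0 := by
    have : (C (e:k) + 4 : k[X]) = C ((e:k) + 4) := by rw [C_add, map_ofNat]
    rw [this]
    exact fun hc => he4 (by simpa using (C_eq_zero.mp hc))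
  have hW := (mul_eq_zero.mp key).resolve_left
    (mul_ne_zero (mul_ne_zero (fun hc => hα (by simpa using (C_eq_zero.mp hc))) hNne)
      (pow_ne_zero _ hPne))
  have hQ' : (1 - C α) * (C β - C γ) * ((X^2-1) * Qp^(e+3))
      = C β*X^(2*e+8) + 2*X^(2*e+7) - 2*X - C β := by
    linear_combination hW - 2*X^(2*e+7) * hPp
  -- geometric sums and the closed form T
  have hX2ne : (X^2 - 1 : k[X]) ≠ 0 := by
    intro h0
    have := congrArg (fun p => coeff p 2) h0
    simp [coeff_one] at this
  have hGe : ∀ n : ℕ, (∑ i ∈ Finset.range n, (X:k[X])^(2*i)) * (X^2 - 1) = X^(2*n) - 1 := by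
    intro n
    have := geom_sum_mul (X^2 : k[X]) n
    simp only [← pow_mul] at this
    exact this
  set T : k[X] := C β * (∑ i ∈ Finset.range (e+4), (X:k[X])^(2*i))
      + 2 * (∑ i ∈ Finset.range (e+3), (X:k[X])^(2*i+1)) with hT
  have hGo : (∑ i ∈ Finset.range (e+3), (X:k[X])^(2*i+1))
      = X * ∑ i ∈ Finset.range (e+3), (X:k[X])^(2*i) := by
    rw [Finset.mul_sum]; exact Finset.sum_congr rfl (fun i _ => by ring)
  have hTmul : (X^2 - 1) * T = C β*X^(2*e+8) + 2*X^(2*e+7) - 2*X - C β := by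
    rw [hT, hGo]
    linear_combination (C β) * hGe (e+4) + (2*X) * hGe (e+3)
  have hR : (1 - C α) * (C β - C γ) * Qp^(e+3) = T := by
    refine mul_left_cancel₀ hX2ne ?_
    linear_combination hQ' - hTmul
  -- coefficients of the sums
  have hce : ∀ (n j : ℕ), (∑ i ∈ Finset.range n, (X:k[X])^(2*i)).coeff (2*j)
      = if j < n then 1 else 0 := by
    intro n j
    rw [finset_sum_coeff]
    have hi : ∀ i, ((X:k[X])^(2*i)).coeff (2*j) = if i = j then 1 else 0 := fun i => by
      rw [coeff_X_pow]; exact if_congr (by omega) rfl rfl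
    simp only [hi]
    rw [Finset.sum_ite_eq' (Finset.range n) j (fun _ => (1:k))]
    simp [Finset.mem_range]
  have hco : ∀ (n j : ℕ), (∑ i ∈ Finset.range n, (X:k[X])^(2*i)).coeff (2*j+1) = 0 := by
    intro n j
    rw [finset_sum_coeff]
    exact Finset.sum_eq_zero fun i _ => by rw [coeff_X_pow, if_neg (by omega)]
  have hoe : ∀ (n j : ℕ), (∑ i ∈ Finset.range n, (X:k[X])^(2*i+1)).coeff (2*j) = 0 := by
    intro n j
    rw [finset_sum_coeff]
    exact Finset.sum_eq_zero fun i _ => by rw [coeff_X_pow, if_neg (by omega)]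
  have hoo : ∀ (n j : ℕ), (∑ i ∈ Finset.range n, (X:k[X])^(2*i+1)).coeff (2*j+1)
      = if j < n then 1 else 0 := by
    intro n j
    rw [finset_sum_coeff]
    have hi : ∀ i, ((X:k[X])^(2*i+1)).coeff (2*j+1) = if i = j then 1 else 0 := fun i => by
      rw [coeff_X_pow]; exact if_congr (by omega) rfl rfl
    simp only [hi]
    rw [Finset.sum_ite_eq' (Finset.range n) j (fun _ => (1:k))]
    simp [Finset.mem_range]
  have h2c : ∀ (p : k[X]) (m : ℕ), ((2:k[X]) * p).coeff m = 2 * p.coeff m := by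
    intro p m
    rw [← map_ofNat (C : k →+* k[X]) 2, coeff_C_mul]
  have hTe : ∀ j, T.coeff (2*j) = if j < e+4 then β else 0 := by
    intro j
    rw [hT, coeff_add, coeff_C_mul, h2c, hce, hoe]
    split_ifs <;> simp
  have hTo : ∀ j, T.coeff (2*j+1) = if j < e+3 then 2 else 0 := by
    intro j
    rw [hT, coeff_add, coeff_C_mul, h2c, hco, hoo]
    split_ifs <;> simp
  have t1 : T.coeff 1 = 2 := by have := hTo 0; rw [if_pos (by omega)] at this; simpa using this
  have t2 : T.coeff 2 = β := by have := hTe 1; rw [if_pos (by omega)] at this; simpa using this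
  have t3 : T.coeff 3 = 2 := by have := hTo 1; rw [if_pos (by omega)] at this; simpa using this
  have t4 : T.coeff 4 = β := by have := hTe 2; rw [if_pos (by omega)] at this; simpa using this
  have t5 : T.coeff 5 = 2 := by have := hTo 2; rw [if_pos (by omega)] at this; simpa using this
  have t6 : T.coeff 6 = β := by have := hTe 3; rw [if_pos (by omega)] at this; simpa using this
  have tA : T.coeff (2*e+5) = 2 := by
    have := hTo (e+2); rw [if_pos (by omega)] at this
    rw [show 2*e+5 = 2*(e+2)+1 by ring]; exact this
  have tB : T.coeff (2*e+6) = β := by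
    have := hTe (e+3); rw [if_pos (by omega)] at this
    rw [show 2*e+6 = 2*(e+3) by ring]; exact this
  have tC : T.coeff (2*e+7) = 0 := by
    have := hTo (e+3); rw [if_neg (by omega)] at this
    rw [show 2*e+7 = 2*(e+3)+1 by ring]; exact this
  have t0 : T.coeff 0 = β := by have := hTe 0; rw [if_pos (by omega)] at this; simpa using this
  -- the logarithmic-derivative identity
  have hdQ : derivative Qp = 2*X + C γ := by
    rw [← hQp]
    simp only [derivative_add, derivative_mul, derivative_C, derivative_X, derivative_one,
      derivative_X_pow, pow_one, zero_mul, mul_one, zero_add, add_zero, Nat.cast_ofNat,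
      map_ofNat]
    ring
  have hdT : derivative T = (C ((e:k)+3)) * ((1 - C α) * (C β - C γ) * (Qp^(e+2) * (2*X + C γ))) := by
    rw [← hR]
    simp only [derivative_mul, derivative_sub, derivative_one, derivative_C, derivative_pow,
      hdQ, zero_mul, mul_zero, zero_sub, sub_zero, zero_add, add_zero]
    push_cast
    ring
  have I2 : X^2 * derivative T + C γ * (X^1 * derivative T) + derivative T
      = C ((e:k)+3) * (2 * (X^1 * T) + C γ * T) := by
    rw [hdT, ← hR]
    linear_combination (C ((e:k)+3) * ((1 - C α) * (C β - C γ)) * Qp^(e+2) * (2*X + C γ)) * hQp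
  have EJ : ∀ j : ℕ, T.coeff (j+1)*((j:k)+1) + γ*(T.coeff (j+2)*((j:k)+2)) + T.coeff (j+3)*((j:k)+3)
      = ((e:k)+3)*(2*T.coeff (j+1) + γ*T.coeff (j+2)) := by
    intro j
    have hc := congrArg (fun p : k[X] => coeff p (j+2)) I2
    beta_reduce at hc
    have e1 : (X^2 * derivative T).coeff (j+2) = (derivative T).coeff j := coeff_X_pow_mul _ 2 j
    have e2 : (X^1 * derivative T).coeff (j+2) = (derivative T).coeff (j+1) :=
      coeff_X_pow_mul (derivative T) 1 (j+1)
    have e3 : (X^1 * T).coeff (j+2) = T.coeff (j+1) := coeff_X_pow_mul T 1 (j+1)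
    rw [coeff_add, coeff_add, e1, coeff_C_mul, e2, coeff_C_mul, coeff_add, h2c, e3,
      coeff_C_mul, coeff_derivative, coeff_derivative, coeff_derivative] at hc
    push_cast at hc
    linear_combination hc
  -- scalar equations
  have E0 := EJ 0
  have E1 := EJ 1
  have E2 := EJ 2
  have E3 := EJ 3
  norm_num at E0 E1 E2 E3
  rw [t1, t2, t3] at E0
  rw [t2, t3, t4] at E1
  rw [t3, t4, t5] at E2
  rw [t4, t5, t6] at E3
  have hsum : β + γ = 0 := by
    have h40 : (2:k)*(2*(β+γ)) = 0 := by linear_combination E3 - E1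
    have := (mul_eq_zero.mp h40).resolve_left h2
    have := (mul_eq_zero.mp this).resolve_left h2
    exact this
  have hprod : β*γ = -4 := by
    have h20 : (2:k)*(β*γ+4) = 0 := by linear_combination E2 - E0
    have := (mul_eq_zero.mp h20).resolve_left h2
    linear_combination this
  have hγ : γ = -β := by linear_combination hsum
  have hβ2 : β^2 = 4 := by linear_combination -hprod + β*hsum
  have h4 : (4:k) ≠ 0 := fun h0 => (mul_ne_zero h2 h2) (by linear_combination h0)
  have hβne : β ≠ 0 := fun h0 => h4 (by linear_combination -hβ2 + β*h0)
  -- the characteristic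
  have EL := EJ (2*e+4)
  rw [show 2*e+4+1 = 2*e+5 by omega, show 2*e+4+2 = 2*e+6 by omega,
    show 2*e+4+3 = 2*e+7 by omega, tA, tB, tC] at EL
  push_cast at EL
  have hn0 : ((2*e+7 : ℕ) : k) = 0 := by
    push_cast
    have h414 : (4*(e:k)+14) = 0 := by linear_combination -EL + ((e:k)+3)*hprod
    have hh := (mul_eq_zero.mp (show (2:k)*(2*(e:k)+7) = 0 by linear_combination h414)).resolve_left h2
    linear_combination hh
  have hdvd : ringChar k ∣ 2*e+7 := (hcast _).mp hn0
  have hpne0 : ringChar k ≠ 0 := by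
    intro h0; rw [h0] at hdvd; exact absurd (zero_dvd_iff.mp hdvd) (by omega)
  have hprime : (ringChar k).Prime := CharP.char_prime_of_ne_zero k hpne0
  have hpodd : ringChar k ≠ 2 := by intro h0; rw [h0] at hdvd; omega
  -- alpha = 1/2
  have hQ0 : (Qp^(e+3)).coeff 0 = 1 := by
    rw [coeff_zero_eq_eval_zero, eval_pow, ← hQp]; simp
  have hc0 : (1 - α) * (β - γ) = β := by
    have h0R := congrArg (fun p : k[X] => coeff p 0) hR
    beta_reduce at h0R
    rw [mul_coeff_zero, mul_coeff_zero, hQ0, t0, coeff_sub, coeff_sub, coeff_one_zero,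
      coeff_C_zero, coeff_C_zero, coeff_C_zero] at h0R
    linear_combination h0R
  have hα12 : α = 1/2 := by
    have hb : β*(1 - 2*α) = 0 := by linear_combination hc0 + (1-α)*hγ
    have h12 := (mul_eq_zero.mp hb).resolve_left hβne
    rw [eq_div_iff h2]
    linear_combination -h12
  -- epsilon
  obtain ⟨ε, hβε⟩ : ∃ ε : k, β = 2*ε := ⟨β/2, by field_simp⟩
  have hε2 : ε^2 = 1 := by
    have h40 : 4*ε^2 - 4 = 0 := by linear_combination hβ2 - (β+2*ε)*hβε
    have := (mul_eq_zero.mp (show (2:k)*(2*(ε^2-1)) = 0 by linear_combination h40)).resolve_left h2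
    have := (mul_eq_zero.mp this).resolve_left h2
    linear_combination this
  have hεne : ε ≠ 0 := fun h0 => one_ne_zero (α := k) (by linear_combination -hε2 + ε*h0)
  have hCε2 : (C ε : k[X])^2 = 1 := by rw [← map_pow, hε2, map_one]
  have hCβ : (C β : k[X]) = 2 * C ε := by rw [hβε, map_mul, map_ofNat]
  have hCβε : (C β : k[X]) * C ε = 2 := by rw [hCβ]; linear_combination 2*hCε2
  have hQfact : Qp = (X - C ε)^2 := by
    rw [← hQp]
    have hCγ : (C γ : k[X]) = -(2*C ε) := by rw [hγ, hβε, map_neg, map_mul, map_ofNat]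
    rw [hCγ]
    linear_combination -hCε2
  have hc0P : (1 - C α) * (C β - C γ) = (C β : k[X]) := by
    simpa only [map_mul, map_sub, map_one] using congrArg C hc0
  have hβCne : (C β : k[X]) ≠ 0 := fun hc => hβne (by simpa using C_eq_zero.mp hc)
  rw [hc0P, hQfact] at hQ'
  rw [show ((X - C ε : k[X])^2)^(e+3) = (X - C ε)^(2*e+6) from by
    rw [← pow_mul, show 2*(e+3) = 2*e+6 from by ring]] at hQ'
  have hS : (X + C ε) * (X - C ε)^(2*e+7) = X^(2*e+8) + C ε * X^(2*e+7) - C ε * X - 1 := by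
    refine mul_left_cancel₀ hβCne ?_
    linear_combination hQ' - (C β * (X - C ε)^(2*e+6))*hCε2 - (X^(2*e+7) - X)*hCβε
  -- binomial coefficient conditions
  have hW7c : ∀ m : ℕ, ((X - C ε : k[X])^(2*e+7)).coeff m
      = (-ε)^(2*e+7-m) * ((2*e+7).choose m : k) := by
    intro m
    rw [show (X - C ε : k[X]) = X + C (-ε) from by rw [map_neg]; ring, coeff_X_add_C_pow]
  have hbin : ∀ j, 2 ≤ j → j ≤ 2*e+6 →
      (((2*e+7).choose j : k)) = (((2*e+7).choose (j-1) : k)) := by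
    intro j hj2 hj6
    obtain ⟨jj, rfl⟩ : ∃ jj, j = jj+2 := ⟨j-2, by omega⟩
    have hc := congrArg (fun p : k[X] => coeff p (jj+2)) hS
    beta_reduce at hc
    have eX : ((X:k[X]) * (X - C ε)^(2*e+7)).coeff (jj+2)
        = ((X - C ε:k[X])^(2*e+7)).coeff (jj+1) := coeff_X_mul _ (jj+1)
    rw [add_mul, coeff_add, coeff_C_mul, eX, hW7c, hW7c, coeff_sub, coeff_sub, coeff_add,
      coeff_X_pow, if_neg (by omega), coeff_C_mul, coeff_X_pow, if_neg (by omega),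
      coeff_C_mul, coeff_X, if_neg (by omega), coeff_one, if_neg (by omega)] at hc
    have hexp : 2*e+7-(jj+1) = (2*e+7-(jj+2))+1 := by omega
    rw [hexp, pow_succ] at hc
    have hKne : ((-ε)^(2*e+7-(jj+2)) : k) ≠ 0 := pow_ne_zero _ (neg_ne_zero.mpr hεne)
    have hfin : (-ε)^(2*e+7-(jj+2)) * (ε * ((((2*e+7).choose (jj+2) : k)) - (((2*e+7).choose (jj+1) : k)))) = 0 := by
      linear_combination hc
    have hz := (mul_eq_zero.mp ((mul_eq_zero.mp hfin).resolve_left hKne)).resolve_left hεne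
    have : (((2*e+7).choose (jj+2):k)) = (((2*e+7).choose (jj+1):k)) := by linear_combination hz
    simpa using this
  have hbinM : ∀ j, 2 ≤ j → j ≤ (2*e+7) - 1 →
      (2*e+7).choose j ≡ (2*e+7).choose (j-1) [MOD ringChar k] := fun j hj2 hj =>
    (CharP.natCast_eq_natCast k (ringChar k)).mp (hbin j hj2 (by omega))
  obtain ⟨m, hm1, hm⟩ := nt hprime hdvd (by omega) hbinM
  exact ⟨⟨ringChar k, m, hprime, hprime.odd_of_ne_two hpodd, rfl, hm1, by omega⟩, hα12, hγ, hβ2⟩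

/-- classification of nontrivial solutions of
`α (X² + βX + 1)^d - X^{2d} - 1 = (α-1)(X² + γX + 1)^d` in `k[X]`,
for `d ≥ 4` and `char k ∤ 2d`.  Such a solution forces `char k = p` an odd
prime with `2d = p^m + 1`, and `α = 1/2`, `γ = -β`, `β² = 4`. -/
theorem stmt0 {k : Type*} [Field k] (d : ℕ) (hd : 4 ≤ d)
    (hchar : ¬ (ringChar k ∣ 2 * d)) (α β γ : k) (hα : α ≠ 0)
    (h : C α * (X ^ 2 + C β * X + 1) ^ d - X ^ (2 * d) - 1
        = C (α - 1) * (X ^ 2 + C γ * X + 1) ^ d) :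
    (∃ (p m : ℕ), p.Prime ∧ Odd p ∧ ringChar k = p ∧ 1 ≤ m ∧ 2 * d = p ^ m + 1)
      ∧ α = 1 / 2 ∧ γ = -β ∧ β ^ 2 = 4 := by
  obtain ⟨e, rfl⟩ : ∃ e, d = e + 4 := ⟨d - 4, by omega⟩
  rw [show 2*(e+4) = 2*e+8 from by ring] at h
  exact stmt0' e hchar α β γ hα h
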